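/- Let n ≥ 4 be even and m ≥ 3. Setting L₀ = {(u_{n/2}, v_j), (u_{n/2+1}, v_j) : 1 ≤ j ≤ m} ⊆ V(P_n □ K_m), one has diam(L₀) = 2 (with respect to distances in P_n □ K_m) and Σ_{x ∈ V(P_n □ K_m)} d(x, L₀) = mn(n−2)/4. -/

import Mathlib

open SimpleGraph Finset

/-- The Petersen graph as the Kneser graph K(5,2). -/
def petersen : SimpleGraph {s : Finset (Fin 5) // s.card = 2} where
  Adj a b := Disjoint a.1 b.1
  symm := ⟨fun _ _ h => h.symm⟩
  loopless := ⟨fun a h => by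
    have h0 : a.1 = ⊥ := disjoint_self.mp h
    have h2 := a.2
    rw [h0] at h2
    simp at h2⟩

/-- A radio labeling of `G`: for all distinct `u, v`,
`d(u,v) + |φ(u) - φ(v)| ≥ diam(G) + 1`. -/
def IsRadioLabeling {V : Type*} (G : SimpleGraph V) (φ : V → ℕ) : Prop :=
  ∀ u v : V, u ≠ v → (G.diam : ℤ) + 1 ≤ (G.dist u v : ℤ) + |(φ u : ℤ) - (φ v : ℤ)|

/-- The span of a labeling: the maximum difference between two labels. -/
noncomputable def span {V : Type*} (φ : V → ℕ) : ℕ :=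
  sSup (Set.range fun p : V × V => φ p.1 - φ p.2)

/-- The radio number of `G`: the minimum span over all radio labelings. -/
noncomputable def radioNumber {V : Type*} (G : SimpleGraph V) : ℕ :=
  sInf {s | ∃ φ : V → ℕ, IsRadioLabeling G φ ∧ span φ = s}

/-- `d(v, S)`: the minimum distance from `v` to a vertex of `S`. -/
noncomputable def distToSet {V : Type*} (G : SimpleGraph V) (v : V) (S : Finset V) : ℕ :=
  sInf ((fun w => G.dist v w) '' ↑S)

/-- `diam(S)`: the maximum distance in `G` between two vertices of `S`. -/
noncomputable def setDiam {V : Type*} (G : SimpleGraph V) (S : Finset V) : ℕ :=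
  sSup {d | ∃ x ∈ S, ∃ y ∈ S, G.dist x y = d}



section helpers

variable {α β : Type*} {G : SimpleGraph α} {H : SimpleGraph β}

private lemma boxProd_walk_le (hG : G.Connected) (hH : H.Connected)
    {x y : α × β} (w : (G □ H).Walk x y) :
    G.dist x.1 y.1 + H.dist x.2 y.2 ≤ w.length := by
  induction w with
  | nil => simp
  | @cons a b c h w ih =>
      rw [SimpleGraph.Walk.length_cons]
      rcases h with ⟨ha, he⟩ | ⟨ha, he⟩
      · have h1 : G.dist a.1 c.1 ≤ 1 + G.dist b.1 c.1 := by
          have := hG.dist_triangle (u := a.1) (v := b.1) (w := c.1)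
          have hd : G.dist a.1 b.1 = 1 := SimpleGraph.dist_eq_one_iff_adj.mpr ha
          omega
        have h2 : H.dist a.2 c.2 = H.dist b.2 c.2 := by rw [he]
        omega
      · have h1 : H.dist a.2 c.2 ≤ 1 + H.dist b.2 c.2 := by
          have := hH.dist_triangle (u := a.2) (v := b.2) (w := c.2)
          have hd : H.dist a.2 b.2 = 1 := SimpleGraph.dist_eq_one_iff_adj.mpr ha
          omega
        have h2 : G.dist a.1 c.1 = G.dist b.1 c.1 := by rw [he]
        omega

private lemma boxProd_dist (hG : G.Connected) (hH : H.Connected) (x y : α × β) :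
    (G □ H).dist x y = G.dist x.1 y.1 + H.dist x.2 y.2 := by
  obtain ⟨x1, x2⟩ := x
  obtain ⟨y1, y2⟩ := y
  dsimp only
  refine le_antisymm ?_ ?_
  · obtain ⟨w1, hw1⟩ := hG.exists_walk_length_eq_dist x1 y1
    obtain ⟨w2, hw2⟩ := hH.exists_walk_length_eq_dist x2 y2
    have := SimpleGraph.dist_le ((w1.boxProdLeft H x2).append (w2.boxProdRight G y1))
    rw [SimpleGraph.Walk.length_append] at this
    have l1 : (w1.boxProdLeft H x2).length = w1.length := SimpleGraph.Walk.length_map _ _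
    have l2 : (w2.boxProdRight G y1).length = w2.length := SimpleGraph.Walk.length_map _ _
    omega
  · obtain ⟨w, hw⟩ := (hG.boxProd hH).exists_walk_length_eq_dist (x1, x2) (y1, y2)
    rw [← hw]
    exact boxProd_walk_le hG hH w

private lemma pathGraph_conn {n : ℕ} (hn : 1 ≤ n) : (pathGraph n).Connected := by
  obtain ⟨k, rfl⟩ : ∃ k, n = k + 1 := ⟨n - 1, by omega⟩
  exact pathGraph_connected k

private lemma pathGraph_dist_le {n : ℕ} (hn : 1 ≤ n) :
    ∀ (k : ℕ) (i j : Fin n), i.val + k = j.val → (pathGraph n).dist i j ≤ k := by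
  intro k
  induction k with
  | zero => intro i j h; have : i = j := Fin.ext (by omega); simp [this]
  | succ k ih =>
      intro i j h
      have hlt : i.val + 1 < n := by omega
      set i' : Fin n := ⟨i.val + 1, by omega⟩ with hi'
      have hadj : (pathGraph n).Adj i i' := pathGraph_adj.mpr (Or.inl rfl)
      have h1 : (pathGraph n).dist i i' = 1 := SimpleGraph.dist_eq_one_iff_adj.mpr hadj
      have h2 : (pathGraph n).dist i' j ≤ k := ih i' j (by simp [hi']; omega)
      have htri := (pathGraph_conn hn).dist_triangle (u := i) (v := i') (w := j)
      omega

private lemma pathGraph_walk_le {n : ℕ} {i j : Fin n} (w : (pathGraph n).Walk i j) :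
    Nat.dist i.val j.val ≤ w.length := by
  induction w with
  | nil => simp
  | @cons a b c h w ih =>
      rw [SimpleGraph.Walk.length_cons]
      have hab : Nat.dist a.val b.val = 1 := by
        rcases pathGraph_adj.mp h with h' | h' <;> simp [Nat.dist] <;> omega
      have := Nat.dist.triangle_inequality a.val b.val c.val
      omega

private lemma pathGraph_dist {n : ℕ} (hn : 1 ≤ n) (i j : Fin n) :
    (pathGraph n).dist i j = Nat.dist i.val j.val := by
  refine le_antisymm ?_ ?_
  · rcases le_total i.val j.val with h | h
    · have := pathGraph_dist_le hn (j.val - i.val) i j (by omega)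
      have hd : Nat.dist i.val j.val = j.val - i.val := by simp [Nat.dist]; omega
      omega
    · have := pathGraph_dist_le hn (i.val - j.val) j i (by omega)
      rw [SimpleGraph.dist_comm] at this
      have hd : Nat.dist i.val j.val = i.val - j.val := by simp [Nat.dist]; omega
      omega
  · obtain ⟨w, hw⟩ := (pathGraph_conn hn).exists_walk_length_eq_dist i j
    rw [← hw]
    exact pathGraph_walk_le w

end helpers


theorem stmt_13 (n m : ℕ) (hn : 4 ≤ n) (he : Even n) (hm : 3 ≤ m) :
    setDiam (pathGraph n □ (⊤ : SimpleGraph (Fin m)))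
        ({x : Fin n × Fin m | x.1.val = n / 2 - 1 ∨ x.1.val = n / 2} : Finset _) = 2
    ∧ 4 * ∑ x : Fin n × Fin m,
        distToSet (pathGraph n □ (⊤ : SimpleGraph (Fin m))) x
          ({x : Fin n × Fin m | x.1.val = n / 2 - 1 ∨ x.1.val = n / 2} : Finset _)
      = m * n * (n - 2) := by
  obtain ⟨h, hh⟩ := he
  have hn2 : n = 2 * h := by omega
  have hh2 : 2 ≤ h := by omega
  have hhalf : n / 2 = h := by omega
  have hm0 : 0 < m := by omega
  haveI : Nonempty (Fin m) := ⟨⟨0, hm0⟩⟩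
  have hGc : (pathGraph n).Connected := pathGraph_conn (by omega)
  have hHc : (⊤ : SimpleGraph (Fin m)).Connected := connected_top
  set S : Finset (Fin n × Fin m) :=
    ({x : Fin n × Fin m | x.1.val = n / 2 - 1 ∨ x.1.val = n / 2} : Finset _) with hS
  have hmemS : ∀ x : Fin n × Fin m, x ∈ S ↔ (x.1.val = h - 1 ∨ x.1.val = h) := by
    intro x
    simp only [hS, mem_filter, mem_univ, true_and, hhalf]
  -- distance formula
  have hdist : ∀ x y : Fin n × Fin m,
      (pathGraph n □ (⊤ : SimpleGraph (Fin m))).dist x y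
        = Nat.dist x.1.val y.1.val + (if x.2 = y.2 then 0 else 1) := by
    intro x y
    rw [boxProd_dist hGc hHc, pathGraph_dist (by omega), SimpleGraph.dist_top]
  -- the two special vertices
  have hlt1 : h - 1 < n := by omega
  have hlt2 : h < n := by omega
  set a : Fin n × Fin m := (⟨h - 1, hlt1⟩, ⟨0, hm0⟩) with ha
  set b : Fin n × Fin m := (⟨h, hlt2⟩, ⟨1, by omega⟩) with hb
  have haS : a ∈ S := (hmemS a).mpr (Or.inl rfl)
  have hbS : b ∈ S := (hmemS b).mpr (Or.inr rfl)
  have hdab : (pathGraph n □ (⊤ : SimpleGraph (Fin m))).dist a b = 2 := by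
    rw [hdist]
    have : (a.2 : Fin m) ≠ b.2 := by
      simp only [ha, hb, ne_eq, Fin.mk.injEq]
      omega
    rw [if_neg this]
    simp only [ha, hb, Nat.dist]
    omega
  constructor
  · -- setDiam = 2
    apply le_antisymm
    · apply csSup_le
      · exact ⟨2, a, haS, b, hbS, hdab⟩
      · rintro d ⟨x, hx, y, hy, rfl⟩
        rw [hdist]
        have h1 := (hmemS x).mp hx
        have h2 := (hmemS y).mp hy
        have hd1 : Nat.dist x.1.val y.1.val ≤ 1 := by
          simp only [Nat.dist]; omega
        split <;> omega
    · apply le_csSup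
      · refine ⟨2, ?_⟩
        rintro d ⟨x, hx, y, hy, rfl⟩
        rw [hdist]
        have h1 := (hmemS x).mp hx
        have h2 := (hmemS y).mp hy
        have hd1 : Nat.dist x.1.val y.1.val ≤ 1 := by
          simp only [Nat.dist]; omega
        split <;> omega
      · exact ⟨a, haS, b, hbS, hdab⟩
  · -- the sum
    have hval : ∀ x : Fin n × Fin m,
        distToSet (pathGraph n □ (⊤ : SimpleGraph (Fin m))) x S
          = if x.1.val < h then h - 1 - x.1.val else x.1.val - h := by
      intro x
      unfold distToSet
      apply le_antisymm
      · -- pick the nearest vertex of S in the same column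
        by_cases hc : x.1.val < h
        · have : (pathGraph n □ (⊤ : SimpleGraph (Fin m))).dist x (⟨h - 1, hlt1⟩, x.2)
              = h - 1 - x.1.val := by
            rw [hdist, if_pos rfl]
            simp only [Nat.dist]; omega
          rw [if_pos hc, ← this]
          exact Nat.sInf_le ⟨(⟨h - 1, hlt1⟩, x.2), (hmemS _).mpr (Or.inl rfl), rfl⟩
        · have : (pathGraph n □ (⊤ : SimpleGraph (Fin m))).dist x (⟨h, hlt2⟩, x.2)
              = x.1.val - h := by
            rw [hdist, if_pos rfl]
            simp only [Nat.dist]; omega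
          rw [if_neg hc, ← this]
          exact Nat.sInf_le ⟨(⟨h, hlt2⟩, x.2), (hmemS _).mpr (Or.inr rfl), rfl⟩
      · apply le_csInf
        · exact ⟨_, ⟨a, Finset.mem_coe.mpr haS, rfl⟩⟩
        · rintro d ⟨w, hw, rfl⟩
          dsimp only
          rw [hdist]
          have h1 := (hmemS w).mp (Finset.mem_coe.mp hw)
          have hd1 : Nat.dist x.1.val w.1.val = x.1.val - w.1.val + (w.1.val - x.1.val) := rfl
          split <;> (rw [hd1]; split <;> omega)
    calc 4 * ∑ x : Fin n × Fin m,
          distToSet (pathGraph n □ (⊤ : SimpleGraph (Fin m))) x S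
        = 4 * ∑ x : Fin n × Fin m,
            (if x.1.val < h then h - 1 - x.1.val else x.1.val - h) := by
          rw [Finset.sum_congr rfl fun x _ => hval x]
      _ = 4 * (m * ∑ i : Fin n, (if i.val < h then h - 1 - i.val else i.val - h)) := by
          rw [Fintype.sum_prod_type_right]
          simp [Finset.sum_const, mul_comm]
      _ = 4 * (m * ∑ k ∈ Finset.range n,
            (if k < h then h - 1 - k else k - h)) := by
          rw [Fin.sum_univ_eq_sum_range (fun k => if k < h then h - 1 - k else k - h)]
      _ = m * n * (n - 2) := by
          have hsplit : ∑ k ∈ Finset.range n, (if k < h then h - 1 - k else k - h)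
              = ∑ k ∈ Finset.range h, (h - 1 - k)
                + ∑ k ∈ Finset.Ico h n, (k - h) := by
            rw [Finset.range_eq_Ico, ← Finset.sum_Ico_consecutive _ (Nat.zero_le h) (by omega : h ≤ n),
              ← Finset.range_eq_Ico]
            congr 1
            · exact Finset.sum_congr rfl fun k hk => if_pos (Finset.mem_range.mp hk)
            · refine Finset.sum_congr rfl fun k hk => if_neg ?_
              have := (Finset.mem_Ico.mp hk).1; omega
          have e1 : ∑ k ∈ Finset.range h, (h - 1 - k) = ∑ k ∈ Finset.range h, k :=
            Finset.sum_range_reflect (fun k => k) h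
          have e2 : ∑ k ∈ Finset.Ico h n, (k - h) = ∑ k ∈ Finset.range h, k := by
            rw [Finset.sum_Ico_eq_sum_range]
            have : n - h = h := by omega
            rw [this]
            exact Finset.sum_congr rfl fun k _ => by omega
          have hg : (∑ k ∈ Finset.range h, k) * 2 = h * (h - 1) :=
            Finset.sum_range_id_mul_two h
          rw [hsplit, e1, e2]
          set s := ∑ k ∈ Finset.range h, k
          have h2 : n - 2 = 2 * (h - 1) := by omega
          rw [h2, hn2]
          calc 4 * (m * (s + s)) = 2 * m * (2 * (s * 2)) := by ring
            _ = m * (2 * h) * (2 * (h - 1)) := by rw [hg]; ring
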